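/- Let d ≥ 2, let P ⊂ ℝ^d be a rational d-polytope, let π : ℝ^d → ℝ^{d-1} be the projection forgetting the last coordinate, let e_d be the last standard basis vector, and define ∂_d^- P = {x ∈ P : x ∉ P + ε e_d for every ε > 0}. Then for every v ∈ ℝ^d and every t ∈ ℤ_{≥0}, the map π restricts to a bijection from ℤ^d ∩ ⋃_{0 ≤ s < 1} (t(∂_d^- P) + v + s e_d) onto ℤ^{d-1} ∩ (t π(P) + π(v)). In particular, #(ℤ^{d-1} ∩ (t π(P) + π(v))) = #(ℤ^d ∩ ⋃_{0 ≤ s < 1} (t(∂_d^- P) + v + s e_d)). -/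

import Mathlib

open Set Pointwise

noncomputable section

/-- The lattice `ℤ^d` inside `ℝ^d`. -/
def latticePts (d : ℕ) : Set (Fin d → ℝ) := {x | ∀ i, ∃ n : ℤ, x i = (n : ℝ)}

/-- A point of `ℝ^d` with all coordinates rational. -/
def IsRationalPoint {d : ℕ} (x : Fin d → ℝ) : Prop := ∀ i, ∃ q : ℚ, x i = (q : ℝ)

/-- A rational `d`-polytope in `ℝ^d`: the convex hull of finitely many rational points
whose affine span is all of `ℝ^d`. -/
def IsRationalDPolytope {d : ℕ} (P : Set (Fin d → ℝ)) : Prop :=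
  ∃ V : Finset (Fin d → ℝ), (∀ x ∈ V, IsRationalPoint x) ∧
    P = convexHull ℝ (V : Set (Fin d → ℝ)) ∧ affineSpan ℝ P = ⊤

/-- The last standard basis vector `e_d` of `ℝ^d` (ambient dimension `d + 1`). -/
def lastDir (d : ℕ) : Fin (d + 1) → ℝ := Pi.single (Fin.last d) 1

/-- `∂_d^- P = {x ∈ P : x ∉ P + ε e_d for every ε > 0}`, the part of `P` visible
from `-∞ · e_d`. -/
def lowerShadow {d : ℕ} (P : Set (Fin (d + 1) → ℝ)) : Set (Fin (d + 1) → ℝ) :=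
  {x ∈ P | ∀ ε : ℝ, 0 < ε → x ∉ (fun y => y + ε • lastDir d) '' P}

lemma lastDir_castSucc {d : ℕ} (i : Fin d) : lastDir d i.castSucc = 0 := by
  simp [lastDir, Pi.single_eq_of_ne (Fin.castSucc_lt_last i).ne]

lemma lastDir_last {d : ℕ} : lastDir d (Fin.last d) = 1 := by
  simp [lastDir]

lemma continuous_finInit {d : ℕ} :
    Continuous (Fin.init : (Fin (d + 1) → ℝ) → Fin d → ℝ) :=
  continuous_pi fun _ => continuous_apply _

lemma lowerShadow_not_lt {d : ℕ} {P : Set (Fin (d + 1) → ℝ)} {a b : Fin (d + 1) → ℝ}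
    (ha : a ∈ lowerShadow P) (hb : b ∈ lowerShadow P) (hab : Fin.init a = Fin.init b) :
    ¬ a (Fin.last d) < b (Fin.last d) := by
  intro hlt
  set ε := b (Fin.last d) - a (Fin.last d) with hε
  apply hb.2 ε (sub_pos.2 hlt)
  refine ⟨a, ha.1, ?_⟩
  funext i
  induction i using Fin.lastCases with
  | last => simp [lastDir_last, hε]
  | cast i =>
      have := congrFun hab i
      simp only [Fin.init] at this
      simp [lastDir_castSucc, this]

lemma lowerShadow_eq_of_init_eq {d : ℕ} {P : Set (Fin (d + 1) → ℝ)} {a b : Fin (d + 1) → ℝ}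
    (ha : a ∈ lowerShadow P) (hb : b ∈ lowerShadow P) (hab : Fin.init a = Fin.init b) :
    a = b := by
  funext i
  induction i using Fin.lastCases with
  | last =>
      exact le_antisymm (not_lt.1 (lowerShadow_not_lt hb ha hab.symm))
        (not_lt.1 (lowerShadow_not_lt ha hb hab))
  | cast i => exact congrFun hab i

lemma exists_lowerShadow_fiber {d : ℕ} {V : Finset (Fin (d + 1) → ℝ)}
    {P : Set (Fin (d + 1) → ℝ)} (hPV : P = convexHull ℝ (V : Set (Fin (d + 1) → ℝ)))
    {p : Fin (d + 1) → ℝ} (hp : p ∈ P) :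
    ∃ y ∈ lowerShadow P, Fin.init y = Fin.init p := by
  have hPc : IsCompact P := hPV ▸ V.finite_toSet.isCompact_convexHull ℝ
  set F : Set (Fin (d + 1) → ℝ) := P ∩ (Fin.init ⁻¹' {Fin.init p}) with hF
  have hFc : IsCompact F := hPc.inter_right (isClosed_singleton.preimage continuous_finInit)
  have hFne : F.Nonempty := ⟨p, hp, rfl⟩
  obtain ⟨y, hyF, hmin⟩ :=
    hFc.exists_isMinOn hFne ((continuous_apply (Fin.last d)).continuousOn)
  refine ⟨y, ⟨hyF.1, ?_⟩, hyF.2⟩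
  rintro ε hε ⟨w, hw, hwy⟩
  have hwinit : Fin.init w = Fin.init y := by
    funext i
    have := congrFun hwy i.castSucc
    simp only [Pi.add_apply, Pi.smul_apply, smul_eq_mul, lastDir_castSucc, mul_zero,
      add_zero] at this
    simp [Fin.init, ← this]
  have hwF : w ∈ F := ⟨hw, by rw [Set.mem_preimage, Set.mem_singleton_iff, hwinit]; exact hyF.2⟩
  have hle : y (Fin.last d) ≤ w (Fin.last d) := hmin hwF
  have : y (Fin.last d) = w (Fin.last d) + ε := by
    have := congrFun hwy (Fin.last d)
    simpa [lastDir_last] using this.symm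
  linarith

/-- Statement 19, with the ambient space `ℝ^{d+1}` (so the hypothesis `d ≥ 2` of the
natural-language statement becomes `1 ≤ d`); the projection forgetting the last
coordinate is `Fin.init`. -/
theorem stmt19 {d : ℕ} (hd : 1 ≤ d) (P : Set (Fin (d + 1) → ℝ))
    (hP : IsRationalDPolytope P) (v : Fin (d + 1) → ℝ) (t : ℕ) :
    Set.BijOn (Fin.init : (Fin (d + 1) → ℝ) → (Fin d → ℝ))
      (latticePts (d + 1) ∩
        ⋃ s ∈ Set.Ico (0 : ℝ) 1, (fun x => (t : ℝ) • x + v + s • lastDir d) '' lowerShadow P)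
      (latticePts d ∩ (fun x => (t : ℝ) • x + Fin.init v) '' (Fin.init '' P)) ∧
    (latticePts d ∩ (fun x => (t : ℝ) • x + Fin.init v) '' (Fin.init '' P)).ncard =
      (latticePts (d + 1) ∩
        ⋃ s ∈ Set.Ico (0 : ℝ) 1,
          (fun x => (t : ℝ) • x + v + s • lastDir d) '' lowerShadow P).ncard := by
  obtain ⟨V, hVrat, hPV, hspan⟩ := hP
  set A := latticePts (d + 1) ∩
      ⋃ s ∈ Set.Ico (0 : ℝ) 1, (fun x => (t : ℝ) • x + v + s • lastDir d) '' lowerShadow P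
    with hA
  set B := latticePts d ∩ (fun x => (t : ℝ) • x + Fin.init v) '' (Fin.init '' P) with hB
  have hAmem : ∀ x, x ∈ A ↔ x ∈ latticePts (d + 1) ∧
      ∃ s : ℝ, (0 ≤ s ∧ s < 1) ∧
        ∃ y ∈ lowerShadow P, (t : ℝ) • y + v + s • lastDir d = x := by
    intro x
    simp [hA, Set.mem_iUnion, Set.mem_Ico, and_assoc]
  have hinit : ∀ (y : Fin (d + 1) → ℝ) (s : ℝ),
      Fin.init ((t : ℝ) • y + v + s • lastDir d) = (t : ℝ) • Fin.init y + Fin.init v := by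
    intro y s
    funext i
    simp [Fin.init, lastDir_castSucc]
  have hlast : ∀ (y : Fin (d + 1) → ℝ) (s : ℝ),
      ((t : ℝ) • y + v + s • lastDir d) (Fin.last d)
        = (t : ℝ) * y (Fin.last d) + v (Fin.last d) + s := by
    intro y s
    simp [lastDir_last]
  have hbij : Set.BijOn (Fin.init : (Fin (d + 1) → ℝ) → (Fin d → ℝ)) A B := by
    refine ⟨?_, ?_, ?_⟩
    · -- MapsTo
      rintro x hx
      obtain ⟨hxl, s, hs, y, hy, hxy⟩ := (hAmem x).1 hx
      refine ⟨fun i => hxl i.castSucc, Fin.init y, ⟨y, hy.1, rfl⟩, ?_⟩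
      rw [← hxy, hinit y s]
    · -- InjOn
      rintro x hx x' hx' hxx'
      obtain ⟨hxl, s, hs, y, hy, hxy⟩ := (hAmem x).1 hx
      obtain ⟨hxl', s', hs', y', hy', hxy'⟩ := (hAmem x').1 hx'
      obtain ⟨n, hn⟩ := hxl (Fin.last d)
      obtain ⟨n', hn'⟩ := hxl' (Fin.last d)
      have hylast : (t : ℝ) * y (Fin.last d) = (t : ℝ) * y' (Fin.last d) := by
        by_cases ht : (t : ℝ) = 0
        · simp [ht]
        · have h1 : (t : ℝ) • Fin.init y + Fin.init v
              = (t : ℝ) • Fin.init y' + Fin.init v := by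
            rw [← hinit y s, ← hinit y' s', hxy, hxy']
            exact hxx'
          have h2 : (t : ℝ) • Fin.init y = (t : ℝ) • Fin.init y' := by
            exact add_right_cancel h1
          have h3 : Fin.init y = Fin.init y' :=
            smul_right_injective (Fin d → ℝ) ht h2
          rw [lowerShadow_eq_of_init_eq hy hy' h3]
      have hxd : x (Fin.last d) = (t : ℝ) * y (Fin.last d) + v (Fin.last d) + s := by
        rw [← hxy, hlast]
      have hxd' : x' (Fin.last d) = (t : ℝ) * y' (Fin.last d) + v (Fin.last d) + s' := by
        rw [← hxy', hlast]
      have hdiff : ((n - n' : ℤ) : ℝ) = s - s' := by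
        push_cast
        rw [← hn, ← hn', hxd, hxd', hylast]
        ring
      have hnn' : n - n' = 0 := by
        have h1 : |((n - n' : ℤ) : ℝ)| < 1 := by
          rw [hdiff, abs_lt]
          constructor <;> linarith [hs.1, hs.2, hs'.1, hs'.2]
        have h2 : |(n - n' : ℤ)| < 1 := by
              rw [← Int.cast_abs] at h1
              exact_mod_cast h1
        rw [abs_lt] at h2
        omega
      have hss' : s = s' := by
        have : ((n - n' : ℤ) : ℝ) = 0 := by rw [hnn']; norm_num
        rw [hdiff] at this
        linarith
      have hxlast : x (Fin.last d) = x' (Fin.last d) := by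
        rw [hxd, hxd', hylast, hss']
      funext i
      induction i using Fin.lastCases with
      | last => exact hxlast
      | cast i => exact congrFun hxx' i
    · -- SurjOn
      rintro z ⟨hzl, q, ⟨p, hp, hpq⟩, hzq⟩
      obtain ⟨y, hy, hyp⟩ := exists_lowerShadow_fiber hPV hp
      set r : ℝ := (t : ℝ) * y (Fin.last d) + v (Fin.last d) with hr
      set s : ℝ := Int.fract (-r) with hs
      have hxinit : Fin.init ((t : ℝ) • y + v + s • lastDir d) = z := by
        rw [hinit, hyp, hpq]
        exact hzq
      refine ⟨(t : ℝ) • y + v + s • lastDir d, (hAmem _).2 ⟨?_, s,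
        ⟨Int.fract_nonneg _, Int.fract_lt_one _⟩, y, hy, rfl⟩, hxinit⟩
      intro i
      induction i using Fin.lastCases with
      | last =>
          refine ⟨-⌊-r⌋, ?_⟩
          have h1 : (⌊-r⌋ : ℝ) + Int.fract (-r) = -r := Int.floor_add_fract _
          rw [hlast]
          push_cast
          linarith
      | cast i =>
          obtain ⟨n, hn⟩ := hzl i
          exact ⟨n, by rw [← hn]; exact congrFun hxinit i⟩
  refine ⟨hbij, ?_⟩
  rw [← hbij.image_eq, Set.ncard_image_of_injOn hbij.injOn]
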